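/- Forward invariance of the expanding cone for ε > 2/π: let ε > 2/π, let q, q' ∈ (−1/2, 1/2), and set α := 1 − πε/cos²(πq) and α' := 1 − πε/cos²(πq'). If a = (a₁, a₂) ∈ ℝ² with a₂ ≠ 0 and a₁/a₂ > α, then the image vector b = J_ε(q)·a = (a₂, −a₁ + 2α·a₂) satisfies b₂ ≠ 0 and α' < b₁/b₂ < 0. In particular the cone field {a : α < a₁/a₂ < 0} is mapped into itself along any orbit. -/

import Mathlib

open Real

/-- The Jacobian matrix of the map `T̃_ε` at a point with angle coordinate `q`. -/
noncomputable def Jmat (ε q : ℝ) : Matrix (Fin 2) (Fin 2) ℝ :=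
  !![0, 1; -1, 2 - 2 * Real.pi * ε / (Real.cos (Real.pi * q))^2]

theorem stmt6 (ε : ℝ) (hε : 2 / Real.pi < ε) (q q' : ℝ)
    (hq : q ∈ Set.Ioo (-(1:ℝ)/2) (1/2)) (hq' : q' ∈ Set.Ioo (-(1:ℝ)/2) (1/2))
    (a : Fin 2 → ℝ) (ha : a 1 ≠ 0)
    (hcone : 1 - Real.pi * ε / (Real.cos (Real.pi * q))^2 < a 0 / a 1) :
    (Jmat ε q).mulVec a 1 ≠ 0 ∧
    1 - Real.pi * ε / (Real.cos (Real.pi * q'))^2 <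
      (Jmat ε q).mulVec a 0 / (Jmat ε q).mulVec a 1 ∧
    (Jmat ε q).mulVec a 0 / (Jmat ε q).mulVec a 1 < 0 := by
  obtain ⟨hq1, hq2⟩ := hq
  obtain ⟨hq'1, hq'2⟩ := hq'
  have hπ := Real.pi_pos
  have hc : 0 < Real.cos (Real.pi * q) := by
    apply Real.cos_pos_of_mem_Ioo
    constructor <;> [nlinarith; nlinarith]
  have hc' : 0 < Real.cos (Real.pi * q') := by
    apply Real.cos_pos_of_mem_Ioo
    constructor <;> [nlinarith; nlinarith]
  have hc1 : Real.cos (Real.pi * q) ≤ 1 := Real.cos_le_one _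
  have hc1' : Real.cos (Real.pi * q') ≤ 1 := Real.cos_le_one _
  set c := Real.cos (Real.pi * q) with hcdef
  set c' := Real.cos (Real.pi * q') with hc'def
  have h2 : 2 < Real.pi * ε := by
    rw [div_lt_iff₀ hπ] at hε; linarith
  have hK : 2 < Real.pi * ε / c ^ 2 := by
    have h1 : Real.pi * ε ≤ Real.pi * ε / c ^ 2 := by
      rw [le_div_iff₀ (by positivity)]
      nlinarith [mul_nonneg (by linarith : (0:ℝ) ≤ Real.pi * ε) (by nlinarith : (0:ℝ) ≤ 1 - c ^ 2)]
    linarith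
  have hK' : 2 < Real.pi * ε / c' ^ 2 := by
    have h1 : Real.pi * ε ≤ Real.pi * ε / c' ^ 2 := by
      rw [le_div_iff₀ (by positivity)]
      nlinarith [mul_nonneg (by linarith : (0:ℝ) ≤ Real.pi * ε) (by nlinarith : (0:ℝ) ≤ 1 - c' ^ 2)]
    linarith
  have hb0 : (Jmat ε q).mulVec a 0 = a 1 := by
    simp [Jmat, Matrix.mulVec, dotProduct, Fin.sum_univ_two]
  have hb1 : (Jmat ε q).mulVec a 1 = -a 0 + (2 - 2 * (Real.pi * ε / c ^ 2)) * a 1 := by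
    simp [Jmat, Matrix.mulVec, dotProduct, Fin.sum_univ_two]
    ring_nf
    exact Or.inl rfl
  set t := a 0 / a 1 with ht
  have hat : a 0 = t * a 1 := by rw [ht, div_mul_cancel₀ _ ha]
  set D := (2 - 2 * (Real.pi * ε / c ^ 2)) - t with hD
  have hDlt : D < -1 := by
    have := hcone
    simp only [hD]
    nlinarith
  have hDne : D ≠ 0 := by linarith
  have hb1' : (Jmat ε q).mulVec a 1 = a 1 * D := by
    rw [hb1, hat, hD]; ring
  have hne : (Jmat ε q).mulVec a 1 ≠ 0 := by
    rw [hb1']; exact mul_ne_zero ha hDne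
  have hratio : (Jmat ε q).mulVec a 0 / (Jmat ε q).mulVec a 1 = 1 / D := by
    rw [hb0, hb1']
    field_simp
  refine ⟨hne, ?_, ?_⟩
  · rw [hratio]
    have h3 : -1 < 1 / D := by
      rw [lt_div_iff_of_neg (by linarith : D < 0)]
      linarith
    linarith
  · rw [hratio]
    exact div_neg_of_pos_of_neg one_pos (by linarith)
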